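/- arXiv:1011.1775 — 2 statements merged into one kernel-verified Lean document; each statement's English description precedes it below -/
import Mathlib

section
/- Let a ∈ ℝ and define A(t) as the 2×2 matrix with rows (1, t) and (0, a). Then the iterated Peano–Baker integrals with base point t₀ = 0 are given explicitly by: I_n(t) is the 2×2 matrix with rows (tⁿ/n!, t^{n+1}/(n+1)! · α_n) and (0, (a t)ⁿ/n!), where α_n = Σ_{ℓ=1}^n ℓ · a^{ℓ−1}. -/
attribute [local instance] Matrix.normedAddCommGroup Matrix.normedSpace

/-- The iterated Peano–Baker integrals with base point `0`: `pbIter A 0 = 1` (identity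
matrix) and `pbIter A (n+1) t = ∫_0^t A τ * pbIter A n τ dτ`. -/
noncomputable def pbIter (A : ℝ → Matrix (Fin 2) (Fin 2) ℝ) :
    ℕ → ℝ → Matrix (Fin 2) (Fin 2) ℝ
  | 0 => fun _ => 1
  | n + 1 => fun t => ∫ τ in (0 : ℝ)..t, A τ * pbIter A n τ

noncomputable instance instENormMat2 : ENormedAddMonoid (Matrix (Fin 2) (Fin 2) ℝ) :=
  NormedAddGroup.toENormedAddMonoid

lemma aux_intgr (f : ℝ → ℝ) (hf : Continuous f) (M : Matrix (Fin 2) (Fin 2) ℝ) (t : ℝ) :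
    IntervalIntegrable (fun τ => f τ • M) MeasureTheory.volume 0 t :=
  (hf.smul continuous_const).intervalIntegrable 0 t

lemma combo (x y z : ℝ) :
    x • !![(1:ℝ),0;0,0] + y • !![(0:ℝ),1;0,0] + z • !![(0:ℝ),0;0,1] = !![x,y;0,z] := by
  ext i j
  fin_cases i <;> fin_cases j <;> simp

set_option maxHeartbeats 1600000 in
theorem stmt17 (a : ℝ) (A : ℝ → Matrix (Fin 2) (Fin 2) ℝ)
    (hA : ∀ t, A t = !![1, t; 0, a]) :
    ∀ (n : ℕ) (t : ℝ),
      pbIter A n t =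
        !![t ^ n / n.factorial,
            t ^ (n + 1) / (n + 1).factorial * ∑ ℓ ∈ Finset.Icc 1 n, (ℓ : ℝ) * a ^ (ℓ - 1);
          0, (a * t) ^ n / n.factorial] := by
  intro n
  induction n with
  | zero =>
    intro t
    show (1 : Matrix (Fin 2) (Fin 2) ℝ) = _
    norm_num
    exact Matrix.one_fin_two
  | succ n ih =>
    intro t
    set S : ℝ := ∑ ℓ ∈ Finset.Icc 1 n, (ℓ : ℝ) * a ^ (ℓ - 1) with hS
    have key : ∀ τ : ℝ, A τ * pbIter A n τ =
        (τ ^ n / n.factorial) • !![(1:ℝ),0;0,0] +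
        (τ ^ (n+1) / (n+1).factorial * S + τ ^ (n+1) * a ^ n / n.factorial) •
          !![(0:ℝ),1;0,0] +
        (a ^ (n+1) * τ ^ n / n.factorial) • !![(0:ℝ),0;0,1] := by
      intro τ
      rw [combo, hA, ih]
      rw [show ((!![1, τ; 0, a] : Matrix (Fin 2) (Fin 2) ℝ)) * _ = _ from
        Matrix.mul_fin_two _ _ _ _ _ _ _ _]
      congr 1; ring_nf
    show (∫ τ in (0:ℝ)..t, A τ * pbIter A n τ) = _
    simp_rw [key]
    have c1 : Continuous fun τ : ℝ => τ ^ n / (n.factorial : ℝ) := by fun_prop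
    have c2 : Continuous fun τ : ℝ =>
        τ ^ (n+1) / ((n+1).factorial : ℝ) * S + τ ^ (n+1) * a ^ n / n.factorial := by
      fun_prop
    have c3 : Continuous fun τ : ℝ => a ^ (n+1) * τ ^ n / (n.factorial : ℝ) := by
      fun_prop
    have i1 := aux_intgr _ c1 !![(1:ℝ),0;0,0] t
    have i2 := aux_intgr _ c2 !![(0:ℝ),1;0,0] t
    have i3 := aux_intgr _ c3 !![(0:ℝ),0;0,1] t
    rw [intervalIntegral.integral_add (i1.add i2) i3,
        intervalIntegral.integral_add i1 i2,
        intervalIntegral.integral_smul_const, intervalIntegral.integral_smul_const,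
        intervalIntegral.integral_smul_const, combo]
    have hfac : ((n+1).factorial : ℝ) = (n+1) * n.factorial := by
      rw [Nat.factorial_succ]; push_cast; ring
    have hfac2 : ((n+2).factorial : ℝ) = (n+2) * (n+1) * n.factorial := by
      rw [Nat.factorial_succ, Nat.factorial_succ]; push_cast; ring
    have hn0 : (n.factorial : ℝ) ≠ 0 := Nat.cast_ne_zero.mpr n.factorial_ne_zero
    have e1 : (∫ τ in (0:ℝ)..t, τ ^ n / (n.factorial : ℝ)) =
        t ^ (n+1) / (n+1).factorial := by
      rw [intervalIntegral.integral_div, integral_pow, hfac]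
      field_simp
      simp
    have e3 : (∫ τ in (0:ℝ)..t, a ^ (n+1) * τ ^ n / (n.factorial : ℝ)) =
        (a * t) ^ (n+1) / (n+1).factorial := by
      simp_rw [mul_div_assoc, intervalIntegral.integral_const_mul,
        intervalIntegral.integral_div, integral_pow, hfac, mul_pow]
      field_simp
      simp
    have e2 : (∫ τ in (0:ℝ)..t,
        (τ ^ (n+1) / ((n+1).factorial : ℝ) * S + τ ^ (n+1) * a ^ n / n.factorial)) =
        t ^ (n+1+1) / (n+1+1).factorial *
          ∑ ℓ ∈ Finset.Icc 1 (n+1), (ℓ : ℝ) * a ^ (ℓ - 1) := by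
      rw [Finset.sum_Icc_succ_top (by omega)]
      rw [intervalIntegral.integral_add ((by fun_prop : Continuous fun τ : ℝ =>
        τ ^ (n+1) / ((n+1).factorial : ℝ) * S).intervalIntegrable 0 t)
        ((by fun_prop : Continuous fun τ : ℝ =>
        τ ^ (n+1) * a ^ n / (n.factorial : ℝ)).intervalIntegrable 0 t)]
      simp only [Nat.add_sub_cancel]
      simp_rw [mul_div_assoc]
      rw [intervalIntegral.integral_mul_const, intervalIntegral.integral_mul_const,
        intervalIntegral.integral_div, integral_pow, hfac2, hfac]
      push_cast
      field_simp
      ring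
    rw [e1, e2, e3]
end

section
/- Let a ∈ ℝ with a ≠ 1 and define A(t) as the 2×2 matrix with rows (1, t) and (0, a). Then the sum of the Peano–Baker series with base point t₀ = 0 is Φ_A(t; 0) = the 2×2 matrix with rows (e^t, f(t)) and (0, e^{a t}), where f(t) = (e^t − e^{a t} − (1 − a)·t·e^{a t}) / (1 − a)². -/
attribute [local instance] Matrix.normedAddCommGroup Matrix.normedSpace

noncomputable instance : ENormedAddMonoid (Matrix (Fin 2) (Fin 2) ℝ) :=
  NormedAddGroup.toENormedAddMonoid

lemma decomp (p q r s : ℝ) : !![p,q;r,s] =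
    p • Matrix.single 0 0 (1:ℝ) + q • Matrix.single 0 1 (1:ℝ) +
    r • Matrix.single 1 0 (1:ℝ) + s • Matrix.single 1 1 (1:ℝ) := by
  ext i j; fin_cases i <;> fin_cases j <;> simp [Matrix.single]

lemma II.smul_const {f : ℝ → ℝ} {t : ℝ} (hf : IntervalIntegrable f MeasureTheory.volume 0 t)
    (C : Matrix (Fin 2) (Fin 2) ℝ) :
    IntervalIntegrable (fun τ => f τ • C) MeasureTheory.volume 0 t :=
  ⟨hf.1.smul_const C, hf.2.smul_const C⟩

lemma integ (g1 g2 g3 g4 : ℝ → ℝ) (t : ℝ)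
    (h1 : IntervalIntegrable g1 MeasureTheory.volume 0 t)
    (h2 : IntervalIntegrable g2 MeasureTheory.volume 0 t)
    (h3 : IntervalIntegrable g3 MeasureTheory.volume 0 t)
    (h4 : IntervalIntegrable g4 MeasureTheory.volume 0 t) :
    (∫ τ in (0:ℝ)..t, !![g1 τ, g2 τ; g3 τ, g4 τ]) =
      !![∫ τ in (0:ℝ)..t, g1 τ, ∫ τ in (0:ℝ)..t, g2 τ;
         ∫ τ in (0:ℝ)..t, g3 τ, ∫ τ in (0:ℝ)..t, g4 τ] := by
  simp only [decomp]
  rw [intervalIntegral.integral_add (((II.smul_const h1 _).add (II.smul_const h2 _)).add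
        (II.smul_const h3 _)) (II.smul_const h4 _),
    intervalIntegral.integral_add ((II.smul_const h1 _).add (II.smul_const h2 _))
        (II.smul_const h3 _),
    intervalIntegral.integral_add (II.smul_const h1 _) (II.smul_const h2 _),
    intervalIntegral.integral_smul_const, intervalIntegral.integral_smul_const,
    intervalIntegral.integral_smul_const, intervalIntegral.integral_smul_const]

lemma mk2_congr {e f g h e' f' g' h' : ℝ} (h1 : e = e') (h2 : f = f') (h3 : g = g')
    (h4 : h = h') : !![e,f;g,h] = !![e',f';g',h'] := by rw [h1,h2,h3,h4]

noncomputable def pbc (a : ℝ) (n : ℕ) : ℝ :=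
  (1 - (n+1)*a^n + n*a^(n+1)) / ((1-a)^2 * ((n+1).factorial))

lemma intpow (k : ℕ) (b t : ℝ) :
    (∫ τ in (0:ℝ)..t, τ^k * b) = t^(k+1)/(k+1) * b := by
  rw [intervalIntegral.integral_mul_const, integral_pow]
  simp

lemma pbc_rec (a : ℝ) (ha : a ≠ 1) (n : ℕ) :
    pbc a n + a^n/(n.factorial) = ((n:ℝ)+2) * pbc a (n+1) := by
  have h1a : (1:ℝ) - a ≠ 0 := sub_ne_zero.mpr (Ne.symm ha)
  have hf : ((n.factorial) : ℝ) ≠ 0 := Nat.cast_ne_zero.mpr (Nat.factorial_ne_zero n)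
  unfold pbc
  simp only [Nat.factorial_succ]
  push_cast
  field_simp
  ring

lemma pbFormula (a : ℝ) (ha : a ≠ 1) (A : ℝ → Matrix (Fin 2) (Fin 2) ℝ)
    (hA : ∀ t, A t = !![1, t; 0, a]) :
    ∀ n t, pbIter A n t = !![t^n/(n.factorial), t^(n+1) * pbc a n; 0, (a*t)^n/(n.factorial)] := by
  intro n
  induction n with
  | zero =>
    intro t
    show (1 : Matrix (Fin 2) (Fin 2) ℝ) = _
    rw [Matrix.one_fin_two]
    congr 1 <;> simp [pbc]
  | succ n IH =>
    intro t
    have hf : ((n.factorial) : ℝ) ≠ 0 := Nat.cast_ne_zero.mpr (Nat.factorial_ne_zero n)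
    have hn1 : ((n:ℝ)+1) ≠ 0 := by positivity
    have hn2 : ((n:ℝ)+2) ≠ 0 := by positivity
    have key : (fun τ => A τ * pbIter A n τ) = fun τ =>
        !![(fun τ : ℝ => τ^n * (1/(n.factorial))) τ, (fun τ : ℝ => τ^(n+1) * (pbc a n + a^n/(n.factorial))) τ;
           (fun τ : ℝ => τ^n * 0) τ, (fun τ : ℝ => τ^n * (a^(n+1)/(n.factorial))) τ] := by
      funext τ
      rw [hA, IH, Matrix.mul_fin_two]
      exact mk2_congr (by ring) (by ring) (by ring) (by ring)
    show (∫ τ in (0:ℝ)..t, A τ * pbIter A n τ) = _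
    rw [key, integ (fun τ : ℝ => τ^n * (1/(n.factorial:ℝ)))
        (fun τ : ℝ => τ^(n+1) * (pbc a n + a^n/(n.factorial:ℝ)))
        (fun τ : ℝ => τ^n * 0) (fun τ : ℝ => τ^n * (a^(n+1)/(n.factorial:ℝ))) t
        (Continuous.intervalIntegrable (by fun_prop) _ _)
        (Continuous.intervalIntegrable (by fun_prop) _ _)
        (Continuous.intervalIntegrable (by fun_prop) _ _)
        (Continuous.intervalIntegrable (by fun_prop) _ _),
      intpow, intpow, intpow, intpow]
    have e1 : t^(n+1)/((n:ℝ)+1) * (1/(n.factorial)) = t^(n+1)/((n+1).factorial : ℕ) := by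
      rw [Nat.factorial_succ]; push_cast; field_simp; try ring
    have e2 : t^(n+1+1)/(((n+1:ℕ):ℝ)+1) * (pbc a n + a^n/(n.factorial)) = t^(n+1+1) * pbc a (n+1) := by
      rw [pbc_rec a ha n]
      have h : ((n+1:ℕ):ℝ)+1 = (n:ℝ)+2 := by push_cast; ring
      rw [h]; field_simp
    have e4 : t^(n+1)/((n:ℝ)+1) * (a^(n+1)/(n.factorial)) = (a*t)^(n+1)/((n+1).factorial : ℕ) := by
      rw [Nat.factorial_succ, mul_pow]; push_cast; field_simp; try ring
    exact mk2_congr e1 e2 (mul_zero _) e4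

lemma hasSum_exp_real (x : ℝ) : HasSum (fun n => x^n / (n.factorial : ℝ)) (Real.exp x) := by
  have := NormedSpace.expSeries_div_hasSum_exp x
  rwa [← Real.exp_eq_exp_ℝ] at this

lemma hasSum_shift (x : ℝ) :
    HasSum (fun n : ℕ => x^(n+1) / ((n+1).factorial : ℝ)) (Real.exp x - 1) := by
  have h := hasSum_exp_real x
  rw [← hasSum_nat_add_iff' 1] at h
  simpa using h

lemma hasSum_topright (a : ℝ) (ha : a ≠ 1) (t : ℝ) :
    HasSum (fun n : ℕ => t^(n+1) * pbc a n)
      ((Real.exp t - Real.exp (a*t) - (1-a) * t * Real.exp (a*t)) / (1-a)^2) := by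
  have h1a : (1:ℝ) - a ≠ 0 := sub_ne_zero.mpr (Ne.symm ha)
  have hu := hasSum_shift t
  have hu' := hasSum_shift (a*t)
  have hv := (hasSum_exp_real (a*t)).mul_left t
  have hv' := (hasSum_exp_real (a*t)).mul_left (a*t)
  have H := (((hu.sub hv).add (hv'.sub hu')).div_const ((1-a)^2))
  have key : (fun n : ℕ => (t^(n+1)/((n+1).factorial : ℝ) - t * ((a*t)^n/(n.factorial:ℝ)) +
      ((a*t) * ((a*t)^n/(n.factorial:ℝ)) - (a*t)^(n+1)/((n+1).factorial : ℝ)))/(1-a)^2) =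
      fun n : ℕ => t^(n+1) * pbc a n := by
    funext n
    have hf : ((n.factorial : ℝ)) ≠ 0 := Nat.cast_ne_zero.mpr (Nat.factorial_ne_zero n)
    unfold pbc
    simp only [Nat.factorial_succ]
    push_cast
    field_simp
    ring
  rw [key] at H
  convert H using 1
  all_goals first | rfl | ring

theorem stmt18 (a : ℝ) (ha : a ≠ 1) (A : ℝ → Matrix (Fin 2) (Fin 2) ℝ)
    (hA : ∀ t, A t = !![1, t; 0, a]) :
    ∀ t : ℝ,
      ∑' n : ℕ, pbIter A n t =
        !![Real.exp t,
            (Real.exp t - Real.exp (a * t) - (1 - a) * t * Real.exp (a * t)) / (1 - a) ^ 2;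
          0, Real.exp (a * t)] := by
  intro t
  set f := (Real.exp t - Real.exp (a * t) - (1 - a) * t * Real.exp (a * t)) / (1 - a) ^ 2 with hf
  have H : HasSum (fun n => pbIter A n t)
      (Real.exp t • Matrix.single 0 0 (1:ℝ) + f • Matrix.single 0 1 (1:ℝ) +
        Real.exp (a*t) • Matrix.single 1 1 (1:ℝ)) := by
    have h1 := (hasSum_exp_real t).smul_const (Matrix.single 0 0 1 : Matrix (Fin 2) (Fin 2) ℝ)
    have h2 := (hasSum_topright a ha t).smul_const (Matrix.single 0 1 1 : Matrix (Fin 2) (Fin 2) ℝ)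
    have h3 := (hasSum_exp_real (a*t)).smul_const (Matrix.single 1 1 1 : Matrix (Fin 2) (Fin 2) ℝ)
    have H := (h1.add h2).add h3
    have eq : (fun n : ℕ => (t^n/(n.factorial:ℝ)) • Matrix.single 0 0 (1:ℝ) +
        (t^(n+1) * pbc a n) • Matrix.single 0 1 (1:ℝ) +
        ((a*t)^n/(n.factorial:ℝ)) • Matrix.single 1 1 (1:ℝ)) =
        fun n => pbIter A n t := by
      funext n
      rw [pbFormula a ha A hA n t, decomp]
      simp only [zero_smul, add_zero]
    rw [eq] at H; rwa [hf]
  rw [H.tsum_eq, decomp]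
  simp only [zero_smul, add_zero]
end
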